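/- arXiv:1902.00908 — 4 statements merged into one kernel-verified Lean document; each statement's English description precedes it below -/
import Mathlib

section
/- Let H be a real inner product space and φ : H → ℝ a differentiable nonnegative function whose gradient is α-Hölder continuous with constant L > 0 and exponent α ∈ (0,1]. Then for every w ∈ H, ‖∇φ(w)‖^{(1+α)/α} ≤ ((1+α) L^{1/α} / α) · φ(w). -/
open Real

theorem holder_self_bounding
    {H : Type*} [NormedAddCommGroup H] [InnerProductSpace ℝ H] [CompleteSpace H]
    (φ : H → ℝ) (hdiff : Differentiable ℝ φ) (hpos : ∀ w : H, 0 ≤ φ w)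
    (α L : ℝ) (hα : 0 < α) (hα1 : α ≤ 1) (hL : 0 < L)
    (hHolder : ∀ w w' : H, ‖gradient φ w - gradient φ w'‖ ≤ L * ‖w - w'‖ ^ α) :
    ∀ w : H, ‖gradient φ w‖ ^ ((1 + α) / α) ≤ ((1 + α) * L ^ (1 / α) / α) * φ w := by
  have hα1' : (0:ℝ) < 1 + α := by linarith
  -- continuity of the gradient
  have hgradcont : Continuous (gradient φ) := by
    rw [continuous_iff_continuousAt]
    intro x
    rw [ContinuousAt, tendsto_iff_norm_sub_tendsto_zero]
    have hbound : ∀ y : H, ‖gradient φ y - gradient φ x‖ ≤ L * ‖y - x‖ ^ α :=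
      fun y => hHolder y x
    have h0 : Filter.Tendsto (fun y : H => L * ‖y - x‖ ^ α) (nhds x) (nhds 0) := by
      have h1 : Filter.Tendsto (fun y : H => ‖y - x‖) (nhds x) (nhds 0) := by
        have hc : Continuous (fun y : H => ‖y - x‖) :=
          (continuous_id.sub continuous_const).norm
        simpa using hc.tendsto x
      have h2 : Filter.Tendsto (fun s : ℝ => L * s ^ α) (nhds 0) (nhds 0) := by
        have h3 : ContinuousAt (fun s : ℝ => s ^ α) 0 :=
          Real.continuousAt_rpow_const 0 α (Or.inr hα.le)
        have h4 := (h3.const_smul L).tendsto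
        simpa [Real.zero_rpow (ne_of_gt hα), Pi.smul_def] using h4
      exact h2.comp h1
    exact squeeze_zero (fun y => norm_nonneg _) hbound h0
  -- descent lemma
  have descent : ∀ w v : H,
      φ (w + v) ≤ φ w + inner ℝ (gradient φ w) v + L / (1 + α) * ‖v‖ ^ (1 + α) := by
    intro w v
    set g := gradient φ w with hg
    have hf : ∀ t : ℝ, HasDerivAt (fun t : ℝ => φ (w + t • v))
        ((inner ℝ (gradient φ (w + t • v)) v : ℝ)) t := by
      intro t
      have h1 : HasFDerivAt φ (InnerProductSpace.toDual ℝ H (gradient φ (w + t • v)))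
          (w + t • v) := ((hdiff _).hasGradientAt).hasFDerivAt
      have h2 : HasDerivAt (fun t : ℝ => w + t • v) v t := by
        simpa using ((hasDerivAt_id t).smul_const v).const_add w
      have := h1.comp_hasDerivAt t h2
      simpa [InnerProductSpace.toDual_apply_apply, Function.comp_def] using this
    have hcont : Continuous (fun t : ℝ => (inner ℝ (gradient φ (w + t • v)) v : ℝ)) := by
      have : Continuous (fun t : ℝ => gradient φ (w + t • v)) :=
        hgradcont.comp (by continuity)
      exact this.inner continuous_const
    have hint : IntervalIntegrable (fun t : ℝ => (inner ℝ (gradient φ (w + t • v)) v : ℝ))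
        MeasureTheory.volume 0 1 := hcont.intervalIntegrable 0 1
    have heq : φ (w + v) - φ w =
        ∫ t in (0:ℝ)..1, (inner ℝ (gradient φ (w + t • v)) v : ℝ) := by
      have := intervalIntegral.integral_eq_sub_of_hasDerivAt
        (f := fun t : ℝ => φ (w + t • v))
        (f' := fun t : ℝ => (inner ℝ (gradient φ (w + t • v)) v : ℝ))
        (a := 0) (b := 1) (fun t _ => hf t) hint
      rw [this]; simp
    have hbound : ∀ t ∈ Set.Icc (0:ℝ) 1,
        (inner ℝ (gradient φ (w + t • v)) v : ℝ) ≤ inner ℝ g v + L * t ^ α * ‖v‖ ^ (1 + α) := by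
      intro t ht
      have h1 : (inner ℝ (gradient φ (w + t • v)) v : ℝ)
          = inner ℝ g v + (inner ℝ (gradient φ (w + t • v) - g) v : ℝ) := by
        rw [inner_sub_left]; ring
      rw [h1]
      have h2 : (inner ℝ (gradient φ (w + t • v) - g) v : ℝ)
          ≤ ‖gradient φ (w + t • v) - g‖ * ‖v‖ := real_inner_le_norm _ _
      have h3 : ‖gradient φ (w + t • v) - g‖ ≤ L * ‖t • v‖ ^ α := by
        have := hHolder (w + t • v) w
        simpa using this
      have h4 : ‖t • v‖ ^ α = t ^ α * ‖v‖ ^ α := by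
        rw [norm_smul, Real.norm_eq_abs, abs_of_nonneg ht.1,
          Real.mul_rpow ht.1 (norm_nonneg v)]
      have h5 : ‖v‖ ^ α * ‖v‖ = ‖v‖ ^ (1 + α) := by
        rw [Real.rpow_add' (norm_nonneg v) (by positivity)]
        rw [Real.rpow_one]; ring
      have : (inner ℝ (gradient φ (w + t • v) - g) v : ℝ) ≤ L * t ^ α * ‖v‖ ^ (1 + α) := by
        calc (inner ℝ (gradient φ (w + t • v) - g) v : ℝ)
            ≤ ‖gradient φ (w + t • v) - g‖ * ‖v‖ := h2
          _ ≤ L * ‖t • v‖ ^ α * ‖v‖ := by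
              apply mul_le_mul_of_nonneg_right h3 (norm_nonneg v)
          _ = L * t ^ α * ‖v‖ ^ (1 + α) := by rw [h4, ← h5]; ring
      linarith
    have hintmono : (∫ t in (0:ℝ)..1, (inner ℝ (gradient φ (w + t • v)) v : ℝ))
        ≤ ∫ t in (0:ℝ)..1, (inner ℝ g v + L * t ^ α * ‖v‖ ^ (1 + α) : ℝ) := by
      apply intervalIntegral.integral_mono_on (by norm_num) hint
      · apply Continuous.intervalIntegrable
        have hc : Continuous (fun t : ℝ => t ^ α) := by
          rw [continuous_iff_continuousAt]
          exact fun x => Real.continuousAt_rpow_const x α (Or.inr hα.le)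
        continuity
      · exact hbound
    have hintval : (∫ t in (0:ℝ)..1, (inner ℝ g v + L * t ^ α * ‖v‖ ^ (1 + α) : ℝ))
        = inner ℝ g v + L / (1 + α) * ‖v‖ ^ (1 + α) := by
      have h6 : IntervalIntegrable (fun t : ℝ => L * t ^ α * ‖v‖ ^ (1 + α))
          MeasureTheory.volume 0 1 := by
        apply Continuous.intervalIntegrable
        have hc : Continuous (fun t : ℝ => t ^ α) := by
          rw [continuous_iff_continuousAt]
          exact fun x => Real.continuousAt_rpow_const x α (Or.inr hα.le)
        continuity
      rw [intervalIntegral.integral_add (intervalIntegrable_const) h6]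
      simp only [intervalIntegral.integral_const, smul_eq_mul]
      have h7 : (∫ t in (0:ℝ)..1, L * t ^ α * ‖v‖ ^ (1 + α))
          = L * ‖v‖ ^ (1 + α) * ∫ t in (0:ℝ)..1, t ^ α := by
        rw [← intervalIntegral.integral_const_mul]
        congr 1; ext t; ring
      rw [h7, integral_rpow (Or.inl (by linarith))]
      rw [Real.one_rpow, Real.zero_rpow (by linarith : α + 1 ≠ 0)]
      ring
    linarith [heq, hintmono, hintval.le, hintval.ge]
  -- main argument
  intro w
  set g := gradient φ w with hg
  by_cases hzero : g = 0
  · rw [hzero]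
    simp only [norm_zero]
    rw [Real.zero_rpow ((div_pos hα1' hα).ne')]
    exact mul_nonneg (by positivity) (hpos w)
  · have hN : 0 < ‖g‖ := norm_pos_iff.mpr hzero
    set N := ‖g‖ with hNdef
    set s : ℝ := (N / L) ^ (1 / α) with hs
    have hspos : 0 < s := Real.rpow_pos_of_pos (by positivity) _
    set c : ℝ := s / N with hc
    have hcpos : 0 < c := by positivity
    set v : H := (-c) • g with hv
    have hip : (inner ℝ g v : ℝ) = -c * N ^ 2 := by
      rw [hv, real_inner_smul_right, real_inner_self_eq_norm_sq]
    have hnv : ‖v‖ = s := by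
      rw [hv, norm_smul, Real.norm_eq_abs, abs_neg, abs_of_pos hcpos, hc]
      field_simp
      exact hNdef.symm
    have hd := descent w v
    rw [hip, hnv] at hd
    clear_value s c v
    have hφv : 0 ≤ φ (w + v) := hpos _
    set K : ℝ := N ^ ((1 + α) / α) / L ^ (1 / α) with hK
    have hLα : (0:ℝ) < L ^ (1 / α) := Real.rpow_pos_of_pos hL _
    have hexp : (1 + α) / α = 1 / α + 1 := by field_simp
    have hKey1 : c * N ^ 2 = K := by
      have h1 : c * N ^ 2 = s * N := by rw [hc]; field_simp
      rw [h1, hs, Real.div_rpow hN.le hL.le, hK,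
        hexp, Real.rpow_add_one hN.ne']
      field_simp
    have hs1 : s ^ (1 + α) = (N / L) ^ ((1 + α) / α) := by
      rw [hs, ← Real.rpow_mul (by positivity)]
      congr 1
      field_simp
    have hL8 : L ^ ((1 + α) / α) = L ^ (1 / α) * L := by
      rw [hexp, Real.rpow_add_one hL.ne']
    have hKey2 : L / (1 + α) * s ^ (1 + α) = K / (1 + α) := by
      rw [hs1, Real.div_rpow hN.le hL.le, hL8, hK]
      field_simp
    clear_value K
    have hKpos : 0 < K := by rw [hK]; positivity
    have hd2 : 0 ≤ φ w - K + K / (1 + α) := by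
      have h2 : L / (1 + α) * s ^ (1 + α) = K / (1 + α) := hKey2
      linarith [hφv, hd, hKey1, h2]
    have hstep : K * α ≤ (1 + α) * φ w := by
      have h9 : K - K / (1 + α) = K * α / (1 + α) := by field_simp; ring
      have h10 : K * α / (1 + α) ≤ φ w := by linarith
      have := (div_le_iff₀ hα1').mp h10
      linarith
    have hNK : N ^ ((1 + α) / α) = K * L ^ (1 / α) := by
      rw [hK]; field_simp
    rw [hNK, div_mul_eq_mul_div, le_div_iff₀ hα]
    calc K * L ^ (1 / α) * α = K * α * L ^ (1 / α) := by ring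
      _ ≤ (1 + α) * φ w * L ^ (1 / α) :=
          mul_le_mul_of_nonneg_right hstep hLα.le
      _ = (1 + α) * L ^ (1 / α) * φ w := by ring
end

section
/- Let (η_t)_{t∈ℕ} be a sequence of nonnegative reals with lim_{t→∞} η_t = 0 and ∑_{t=1}^∞ η_t = ∞. Let α, a > 0 and t₁ ∈ ℕ be such that η_t < 1/a for all t ≥ t₁. Then lim_{T→∞} ∑_{t=t₁}^T η_t^{1+α} ∏_{k=t+1}^T (1 - a η_k) = 0. -/
open Real Finset Filter

private lemma telescope_Ico (g : ℕ → ℝ) (m n : ℕ) (h : m ≤ n) :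
    ∑ t ∈ Finset.Ico m n, (g (t + 1) - g t) = g n - g m := by
  induction n, h using Nat.le_induction with
  | base => simp
  | succ n hmn ih =>
      rw [Finset.sum_Ico_succ_top (by omega), ih]; ring

theorem step_size_product_lemma
    (η : ℕ → ℝ) (hη : ∀ t, 0 ≤ η t)
    (hlim : Tendsto η atTop (nhds 0))
    (hdiv : Tendsto (fun T => ∑ t ∈ Finset.Icc 1 T, η t) atTop atTop)
    (α a : ℝ) (hα : 0 < α) (ha : 0 < a) (t₁ : ℕ)
    (hsmall : ∀ t, t₁ ≤ t → η t < 1 / a) :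
    Tendsto (fun T => ∑ t ∈ Finset.Icc t₁ T,
        η t ^ (1 + α) * ∏ k ∈ Finset.Icc (t + 1) T, (1 - a * η k))
      atTop (nhds 0) := by
  have hfac0 : ∀ k, t₁ ≤ k → 0 ≤ 1 - a * η k := by
    intro k hk
    have h1 := hsmall k hk
    have h2 : a * η k < a * (1 / a) := mul_lt_mul_of_pos_left h1 ha
    have h3 : a * (1 / a) = 1 := by field_simp
    linarith
  have hfac1 : ∀ k, 1 - a * η k ≤ 1 := by
    intro k; nlinarith [hη k, ha.le]
  -- nonnegativity of each term and of the sum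
  have hQnonneg : ∀ (s T : ℕ), t₁ ≤ s → 0 ≤ ∏ k ∈ Finset.Icc s T, (1 - a * η k) := by
    intro s T hs
    exact Finset.prod_nonneg fun k hk => hfac0 k (le_trans hs (Finset.mem_Icc.mp hk).1)
  have hQle1 : ∀ (s T : ℕ), t₁ ≤ s → ∏ k ∈ Finset.Icc s T, (1 - a * η k) ≤ 1 := by
    intro s T hs
    exact Finset.prod_le_one (fun k hk => hfac0 k (le_trans hs (Finset.mem_Icc.mp hk).1))
      (fun k _ => hfac1 k)
  have hSnonneg : ∀ T, 0 ≤ ∑ t ∈ Finset.Icc t₁ T,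
      η t ^ (1 + α) * ∏ k ∈ Finset.Icc (t + 1) T, (1 - a * η k) := by
    intro T
    refine Finset.sum_nonneg fun t ht => mul_nonneg (Real.rpow_nonneg (hη t) _) ?_
    exact hQnonneg (t + 1) T (le_trans (Finset.mem_Icc.mp ht).1 (Nat.le_succ t))
  rw [Metric.tendsto_nhds]
  intro ε hε
  -- choose t₂
  set δ := (ε * a / 2) ^ (α⁻¹) with hδdef
  have hεa : 0 < ε * a / 2 := by positivity
  have hδ : 0 < δ := Real.rpow_pos_of_pos hεa _
  obtain ⟨m, hm⟩ := eventually_atTop.mp (hlim.eventually_lt_const hδ)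
  set t₂ := max m (max t₁ 1) with ht₂def
  have ht₁t₂ : t₁ ≤ t₂ := le_trans (le_max_left _ _) (le_max_right _ _)
  have h1t₂ : 1 ≤ t₂ := le_trans (le_max_right _ _) (le_max_right _ _)
  have hηα : ∀ t, t₂ ≤ t → η t ^ α ≤ ε * a / 2 := by
    intro t ht
    have h1 : η t ^ α ≤ δ ^ α :=
      Real.rpow_le_rpow (hη t) (hm t (le_trans (le_max_left _ _) ht)).le hα.le
    have h2 : δ ^ α = ε * a / 2 := by
      rw [hδdef, ← Real.rpow_mul hεa.le, inv_mul_cancel₀ hα.ne', Real.rpow_one]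
    linarith
  -- telescoping identity for the tail
  have hkey : ∀ T, t₂ ≤ T + 1 →
      ∑ t ∈ Finset.Icc t₂ T, (a * η t * ∏ k ∈ Finset.Icc (t + 1) T, (1 - a * η k))
        = 1 - ∏ k ∈ Finset.Icc t₂ T, (1 - a * η k) := by
    intro T hT
    have htel := telescope_Ico (fun s => ∏ k ∈ Finset.Icc s T, (1 - a * η k)) t₂ (T + 1) hT
    rw [show Finset.Icc (T + 1) T = (∅ : Finset ℕ) from Finset.Icc_eq_empty (by omega),
      Finset.prod_empty] at htel
    calc ∑ t ∈ Finset.Icc t₂ T, (a * η t * ∏ k ∈ Finset.Icc (t + 1) T, (1 - a * η k))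
        = ∑ t ∈ Finset.Ico t₂ (T + 1),
            ((∏ k ∈ Finset.Icc (t + 1) T, (1 - a * η k))
              - ∏ k ∈ Finset.Icc t T, (1 - a * η k)) := by
          rw [← Finset.Ico_add_one_right_eq_Icc]
          refine Finset.sum_congr rfl fun t ht => ?_
          have htT : t ≤ T := by have := (Finset.mem_Ico.mp ht).2; omega
          have hins : insert t (Finset.Icc (t + 1) T) = Finset.Icc t T := by
            rw [Finset.Icc_add_one_left_eq_Ioc, Finset.Ioc_insert_left htT]
          rw [← hins, Finset.prod_insert (by simp only [Finset.mem_Icc]; omega)]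
          ring
      _ = 1 - ∏ k ∈ Finset.Icc t₂ T, (1 - a * η k) := htel
  -- the tail product tends to zero (via exp bound)
  have hA : Tendsto (fun T => ∑ k ∈ Finset.Icc t₂ T, η k) atTop atTop := by
    set C₀ := ∑ k ∈ Finset.Ico 1 t₂, η k with hC₀
    have hdiv' : Tendsto (fun T => (∑ t ∈ Finset.Icc 1 T, η t) - C₀) atTop atTop :=
      tendsto_atTop_add_const_right _ (-C₀) hdiv
    refine Tendsto.congr' ?_ hdiv'
    filter_upwards [eventually_ge_atTop t₂] with T hT
    have : ∑ t ∈ Finset.Icc 1 T, η t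
        = C₀ + ∑ k ∈ Finset.Icc t₂ T, η k := by
      rw [← Finset.Ico_add_one_right_eq_Icc, ← Finset.sum_Ico_consecutive _ h1t₂ (by omega),
        Finset.Ico_add_one_right_eq_Icc]
    rw [this]; ring
  have hProd0 : Tendsto (fun T => Real.exp (-(a * ∑ k ∈ Finset.Icc t₂ T, η k)))
      atTop (nhds 0) :=
    Real.tendsto_exp_atBot.comp (tendsto_neg_atTop_atBot.comp (hA.const_mul_atTop ha))
  have hPle : ∀ T, ∏ k ∈ Finset.Icc t₂ T, (1 - a * η k)
      ≤ Real.exp (-(a * ∑ k ∈ Finset.Icc t₂ T, η k)) := by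
    intro T
    have h1 : ∏ k ∈ Finset.Icc t₂ T, (1 - a * η k)
        ≤ ∏ k ∈ Finset.Icc t₂ T, Real.exp (-(a * η k)) := by
      refine Finset.prod_le_prod (fun k hk => hfac0 k
        (le_trans ht₁t₂ (Finset.mem_Icc.mp hk).1)) (fun k _ => ?_)
      have := Real.add_one_le_exp (-(a * η k))
      linarith
    have h2 : ∏ k ∈ Finset.Icc t₂ T, Real.exp (-(a * η k))
        = Real.exp (-(a * ∑ k ∈ Finset.Icc t₂ T, η k)) := by
      rw [← Real.exp_sum]
      congr 1
      rw [Finset.mul_sum, ← Finset.sum_neg_distrib]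
    linarith
  set C := ∑ t ∈ Finset.Ico t₁ t₂, η t ^ (1 + α) with hCdef
  have hC : 0 ≤ C := Finset.sum_nonneg fun t _ => Real.rpow_nonneg (hη t) _
  have hbound : 0 < ε / (2 * (C + 1)) := by positivity
  filter_upwards [hProd0.eventually_lt_const hbound, eventually_ge_atTop t₂] with T hexp hT
  rw [Real.dist_eq, sub_zero, abs_of_nonneg (hSnonneg T)]
  -- split the sum
  have hsplit : ∑ t ∈ Finset.Icc t₁ T,
      η t ^ (1 + α) * ∏ k ∈ Finset.Icc (t + 1) T, (1 - a * η k)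
      = (∑ t ∈ Finset.Ico t₁ t₂,
          η t ^ (1 + α) * ∏ k ∈ Finset.Icc (t + 1) T, (1 - a * η k))
        + ∑ t ∈ Finset.Icc t₂ T,
          η t ^ (1 + α) * ∏ k ∈ Finset.Icc (t + 1) T, (1 - a * η k) := by
    rw [← Finset.Ico_add_one_right_eq_Icc, ← Finset.sum_Ico_consecutive _ ht₁t₂ (by omega),
      Finset.Ico_add_one_right_eq_Icc]
  -- head bound
  have hhead : ∑ t ∈ Finset.Ico t₁ t₂,
      η t ^ (1 + α) * ∏ k ∈ Finset.Icc (t + 1) T, (1 - a * η k)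
      ≤ C * ∏ k ∈ Finset.Icc t₂ T, (1 - a * η k) := by
    rw [hCdef, Finset.sum_mul]
    refine Finset.sum_le_sum fun t ht => ?_
    obtain ⟨ht₁, ht₂'⟩ := Finset.mem_Ico.mp ht
    have hprodsplit : ∏ k ∈ Finset.Icc (t + 1) T, (1 - a * η k)
        = (∏ k ∈ Finset.Ico (t + 1) t₂, (1 - a * η k))
          * ∏ k ∈ Finset.Icc t₂ T, (1 - a * η k) := by
      rw [← Finset.Ico_add_one_right_eq_Icc,
        ← Finset.prod_Ico_consecutive _ (show t + 1 ≤ t₂ by omega) (show t₂ ≤ T + 1 by omega),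
        Finset.Ico_add_one_right_eq_Icc]
    rw [hprodsplit, ← mul_assoc]
    refine mul_le_mul_of_nonneg_right ?_ (hQnonneg t₂ T ht₁t₂)
    have hle1 : ∏ k ∈ Finset.Ico (t + 1) t₂, (1 - a * η k) ≤ 1 :=
      Finset.prod_le_one (fun k hk => hfac0 k (by have := (Finset.mem_Ico.mp hk).1; omega))
        (fun k _ => hfac1 k)
    have hge0 : 0 ≤ ∏ k ∈ Finset.Ico (t + 1) t₂, (1 - a * η k) :=
      Finset.prod_nonneg fun k hk => hfac0 k (by have := (Finset.mem_Ico.mp hk).1; omega)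
    nlinarith [Real.rpow_nonneg (hη t) (1 + α)]
  -- tail bound
  have htail : ∑ t ∈ Finset.Icc t₂ T,
      η t ^ (1 + α) * ∏ k ∈ Finset.Icc (t + 1) T, (1 - a * η k) ≤ ε / 2 := by
    have hstep : ∀ t ∈ Finset.Icc t₂ T,
        η t ^ (1 + α) * ∏ k ∈ Finset.Icc (t + 1) T, (1 - a * η k)
        ≤ (ε / 2) * (a * η t * ∏ k ∈ Finset.Icc (t + 1) T, (1 - a * η k)) := by
      intro t ht
      obtain ⟨ht₂', htT⟩ := Finset.mem_Icc.mp ht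
      have hrw : η t ^ (1 + α) = η t * η t ^ α := by
        rw [Real.rpow_add' (hη t) (by positivity), Real.rpow_one]
      have hQ : 0 ≤ ∏ k ∈ Finset.Icc (t + 1) T, (1 - a * η k) :=
        hQnonneg (t + 1) T (by omega)
      have hηt : 0 ≤ η t := hη t
      have h := hηα t ht₂'
      rw [hrw]
      calc η t * η t ^ α * ∏ k ∈ Finset.Icc (t + 1) T, (1 - a * η k)
          ≤ η t * (ε * a / 2) * ∏ k ∈ Finset.Icc (t + 1) T, (1 - a * η k) := by
            apply mul_le_mul_of_nonneg_right _ hQ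
            exact mul_le_mul_of_nonneg_left h hηt
        _ = (ε / 2) * (a * η t * ∏ k ∈ Finset.Icc (t + 1) T, (1 - a * η k)) := by ring
    calc ∑ t ∈ Finset.Icc t₂ T,
          η t ^ (1 + α) * ∏ k ∈ Finset.Icc (t + 1) T, (1 - a * η k)
        ≤ ∑ t ∈ Finset.Icc t₂ T,
          (ε / 2) * (a * η t * ∏ k ∈ Finset.Icc (t + 1) T, (1 - a * η k)) :=
          Finset.sum_le_sum hstep
      _ = (ε / 2) * ∑ t ∈ Finset.Icc t₂ T,
          (a * η t * ∏ k ∈ Finset.Icc (t + 1) T, (1 - a * η k)) := by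
          rw [Finset.mul_sum]
      _ = (ε / 2) * (1 - ∏ k ∈ Finset.Icc t₂ T, (1 - a * η k)) := by
          rw [hkey T (by omega)]
      _ ≤ ε / 2 := by nlinarith [hQnonneg t₂ T ht₁t₂]
  -- head strict bound
  have hheadlt : (∑ t ∈ Finset.Ico t₁ t₂,
      η t ^ (1 + α) * ∏ k ∈ Finset.Icc (t + 1) T, (1 - a * η k)) < ε / 2 := by
    have h1 : C * ∏ k ∈ Finset.Icc t₂ T, (1 - a * η k)
        ≤ (C + 1) * Real.exp (-(a * ∑ k ∈ Finset.Icc t₂ T, η k)) := by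
      have := hPle T
      have hQ := hQnonneg t₂ T ht₁t₂
      nlinarith [Real.exp_pos (-(a * ∑ k ∈ Finset.Icc t₂ T, η k))]
    have h2 : (C + 1) * Real.exp (-(a * ∑ k ∈ Finset.Icc t₂ T, η k))
        < (C + 1) * (ε / (2 * (C + 1))) := by
      apply mul_lt_mul_of_pos_left hexp (by linarith)
    have h3 : (C + 1) * (ε / (2 * (C + 1))) = ε / 2 := by
      field_simp
    linarith [hhead]
  rw [hsplit]
  linarith
end

section
/- Let (B_t)_{t≥t₁} be a nonnegative real sequence, μ > 0, C > 0, α ∈ (0,1], and (η_t) nonnegative with η_t ≤ 1/μ for t ≥ t₁, lim_{t→∞} η_t = 0, ∑_{t=1}^∞ η_t = ∞, and ∑_{t=1}^∞ η_t^{1+α} < ∞. If B_{t+1} ≤ (1 - μ η_t) B_t + C η_t^{1+α} for all t ≥ t₁, then lim_{t→∞} B_t = 0. -/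
open Real Finset Filter

theorem pl_recursion_convergence
    (B η : ℕ → ℝ) (μ C α : ℝ) (t₁ : ℕ)
    (hμ : 0 < μ) (hC : 0 < C) (hα : 0 < α) (hα1 : α ≤ 1)
    (hB : ∀ t, 0 ≤ B t) (hη : ∀ t, 0 ≤ η t)
    (hηsmall : ∀ t, t₁ ≤ t → η t ≤ 1 / μ)
    (hlim : Tendsto η atTop (nhds 0))
    (hdiv : Tendsto (fun T => ∑ t ∈ Finset.Icc 1 T, η t) atTop atTop)
    (hsum : Summable (fun t => η t ^ (1 + α)))
    (hrec : ∀ t, t₁ ≤ t → B (t + 1) ≤ (1 - μ * η t) * B t + C * η t ^ (1 + α)) :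
    Tendsto B atTop (nhds 0) := by
  have hfac : ∀ t, t₁ ≤ t → 0 ≤ 1 - μ * η t := by
    intro t ht
    have h1 := hηsmall t ht
    have h2 : μ * η t ≤ μ * (1 / μ) := by
      exact mul_le_mul_of_nonneg_left h1 hμ.le
    rw [mul_one_div, div_self hμ.ne'] at h2
    linarith
  have hpow : ∀ t, (0:ℝ) ≤ η t ^ (1 + α) := fun t => Real.rpow_nonneg (hη t) _
  -- key unrolled inequality
  have key : ∀ T₀, t₁ ≤ T₀ → ∀ T, T₀ ≤ T →
      B T ≤ B T₀ * ∏ t ∈ Finset.Ico T₀ T, (1 - μ * η t)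
        + C * ∑ t ∈ Finset.Ico T₀ T, η t ^ (1 + α) := by
    intro T₀ hT₀ T hT
    induction T, hT using Nat.le_induction with
    | base => simp
    | succ T hT ih =>
      have htT : t₁ ≤ T := hT₀.trans hT
      have ha : 0 ≤ 1 - μ * η T := hfac T htT
      have hS : (0:ℝ) ≤ ∑ t ∈ Finset.Ico T₀ T, η t ^ (1 + α) :=
        Finset.sum_nonneg fun t _ => hpow t
      have hP : (0:ℝ) ≤ ∏ t ∈ Finset.Ico T₀ T, (1 - μ * η t) :=
        Finset.prod_nonneg fun t htm => hfac t (hT₀.trans (Finset.mem_Ico.1 htm).1)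
      have haη : 0 ≤ μ * η T := mul_nonneg hμ.le (hη T)
      calc B (T + 1) ≤ (1 - μ * η T) * B T + C * η T ^ (1 + α) := hrec T htT
        _ ≤ (1 - μ * η T) *
              (B T₀ * ∏ t ∈ Finset.Ico T₀ T, (1 - μ * η t)
                + C * ∑ t ∈ Finset.Ico T₀ T, η t ^ (1 + α)) + C * η T ^ (1 + α) := by
            have := mul_le_mul_of_nonneg_left ih ha
            linarith
        _ ≤ B T₀ * ∏ t ∈ Finset.Ico T₀ (T + 1), (1 - μ * η t)
              + C * ∑ t ∈ Finset.Ico T₀ (T + 1), η t ^ (1 + α) := by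
            rw [Finset.prod_Ico_succ_top hT, Finset.sum_Ico_succ_top hT]
            nlinarith [mul_nonneg (mul_nonneg hC.le hS) haη]
  -- product bounded by exponential
  have prodle : ∀ T₀ T, t₁ ≤ T₀ →
      ∏ t ∈ Finset.Ico T₀ T, (1 - μ * η t)
        ≤ Real.exp (-(μ * ∑ t ∈ Finset.Ico T₀ T, η t)) := by
    intro T₀ T hT₀
    have : ∏ t ∈ Finset.Ico T₀ T, (1 - μ * η t)
        ≤ ∏ t ∈ Finset.Ico T₀ T, Real.exp (-(μ * η t)) := by
      apply Finset.prod_le_prod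
      · intro t ht
        exact hfac t (hT₀.trans (Finset.mem_Ico.1 ht).1)
      · intro t _
        have := Real.add_one_le_exp (-(μ * η t))
        linarith
    rw [← Real.exp_sum] at this
    simpa [Finset.mul_sum, neg_add, ← Finset.sum_neg_distrib] using this
  -- divergence of sums over Ico 1 T
  have h1 : Tendsto (fun T : ℕ => ∑ t ∈ Finset.Ico 1 (T + 1), η t) atTop atTop := by
    simpa [Finset.Ico_add_one_right_eq_Icc] using hdiv
  have h2 : Tendsto (fun T : ℕ => ∑ t ∈ Finset.Ico 1 T, η t) atTop atTop := by
    apply Tendsto.congr' _ (h1.comp (tendsto_sub_atTop_nat 1))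
    filter_upwards [eventually_ge_atTop 1] with T hT
    simp [Function.comp, Nat.sub_add_cancel hT]
  -- tail of the summable series tends to 0
  have htail : Tendsto (fun n => ∑' k, η (n + k) ^ (1 + α)) atTop (nhds 0) := by
    have := tendsto_sum_nat_add (fun t => η t ^ (1 + α))
    simpa [add_comm] using this
  have htail' : Tendsto (fun n => C * ∑' k, η (n + k) ^ (1 + α)) atTop (nhds 0) := by
    simpa using htail.const_mul C
  rw [Metric.tendsto_atTop]
  intro ε hε
  -- choose T₀
  have hev : ∀ᶠ n in atTop, (t₁ ≤ n ∧ 1 ≤ n) ∧ C * ∑' k, η (n + k) ^ (1 + α) < ε / 2 := by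
    filter_upwards [eventually_ge_atTop t₁, eventually_ge_atTop 1,
      htail'.eventually_lt_const (by linarith : (0:ℝ) < ε / 2)] with n h₁ h₂ h₃
    exact ⟨⟨h₁, h₂⟩, h₃⟩
  obtain ⟨T₀, hT₀⟩ := hev.exists
  obtain ⟨⟨hT₀t₁, hT₀1⟩, hT₀tail⟩ := hT₀
  -- tail sums are small
  have hsumshift : Summable (fun k => η (T₀ + k) ^ (1 + α)) := by
    have := (summable_nat_add_iff T₀).2 hsum
    simpa [add_comm] using this
  have htailbd : ∀ T, C * ∑ t ∈ Finset.Ico T₀ T, η t ^ (1 + α) < ε / 2 := by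
    intro T
    have hle : ∑ t ∈ Finset.Ico T₀ T, η t ^ (1 + α) ≤ ∑' k, η (T₀ + k) ^ (1 + α) := by
      rw [Finset.sum_Ico_eq_sum_range]
      exact Summable.sum_le_tsum _ (fun k _ => hpow _) hsumshift
    have := mul_le_mul_of_nonneg_left hle hC.le
    linarith
  -- divergence of sums over Ico T₀ T
  have hdiv2 : Tendsto (fun T => ∑ t ∈ Finset.Ico T₀ T, η t) atTop atTop := by
    have h3 : Tendsto (fun T : ℕ => ∑ t ∈ Finset.Ico 1 T, η t
        + -(∑ t ∈ Finset.Ico 1 T₀, η t)) atTop atTop :=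
      tendsto_atTop_add_const_right _ _ h2
    apply Tendsto.congr' _ h3
    filter_upwards [eventually_ge_atTop T₀] with T hT
    have := Finset.sum_Ico_consecutive η hT₀1 hT
    linarith
  -- the first term tends to 0
  have hexp : Tendsto
      (fun T => B T₀ * Real.exp (-(μ * ∑ t ∈ Finset.Ico T₀ T, η t))) atTop (nhds 0) := by
    have hμS : Tendsto (fun T => μ * ∑ t ∈ Finset.Ico T₀ T, η t) atTop atTop :=
      Tendsto.const_mul_atTop hμ hdiv2
    have := (Real.tendsto_exp_neg_atTop_nhds_zero.comp hμS).const_mul (B T₀)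
    simpa using this
  have hexp' : ∀ᶠ T in atTop,
      B T₀ * Real.exp (-(μ * ∑ t ∈ Finset.Ico T₀ T, η t)) < ε / 2 :=
    hexp.eventually_lt_const (by linarith : (0:ℝ) < ε / 2)
  obtain ⟨N, hN⟩ := (hexp'.and (eventually_ge_atTop T₀)).exists_forall_of_atTop
  refine ⟨N, fun T hT => ?_⟩
  obtain ⟨hNe, hNT⟩ := hN T hT
  have hkey := key T₀ hT₀t₁ T hNT
  have hprod := prodle T₀ T hT₀t₁
  have hBT₀ := hB T₀
  have h4 : B T₀ * ∏ t ∈ Finset.Ico T₀ T, (1 - μ * η t)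
      ≤ B T₀ * Real.exp (-(μ * ∑ t ∈ Finset.Ico T₀ T, η t)) :=
    mul_le_mul_of_nonneg_left hprod hBT₀
  have h5 := htailbd T
  rw [Real.dist_eq, sub_zero, abs_of_nonneg (hB T)]
  linarith
end

section
/- Let (B_t) be a nonnegative real sequence, μ > 0, C > 0, α ∈ (0,1], and let η_t = 2/((t+1)μ). Suppose there exists t₀ ∈ ℕ, t₀ ≥ 1, such that B_{t+1} ≤ ((t-1)/(t+1)) B_t + C (2/((t+1)μ))^{1+α} for all t ≥ t₀. Then for all T ≥ t₀, B_{T+1} ≤ t₀(t₀-1) B_{t₀} / (T(T+1)) + (1 + 1/t₀)^{1-α} C (2/μ)^{1+α} / ((2-α) T^α). In particular B_T = O(T^{-α}). -/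
open Real

theorem pl_rate_recursion
    (B : ℕ → ℝ) (μ C α : ℝ) (t₀ : ℕ)
    (hμ : 0 < μ) (hC : 0 < C) (hα : 0 < α) (hα1 : α ≤ 1) (ht₀ : 1 ≤ t₀)
    (hB : ∀ t, 0 ≤ B t)
    (hrec : ∀ t : ℕ, t₀ ≤ t →
      B (t + 1) ≤ (((t : ℝ) - 1) / ((t : ℝ) + 1)) * B t
        + C * (2 / (((t : ℝ) + 1) * μ)) ^ (1 + α)) :
    ∀ T : ℕ, t₀ ≤ T →
      B (T + 1) ≤ (t₀ : ℝ) * ((t₀ : ℝ) - 1) * B t₀ / ((T : ℝ) * ((T : ℝ) + 1))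
        + (1 + 1 / (t₀ : ℝ)) ^ (1 - α) * C * (2 / μ) ^ (1 + α)
          / ((2 - α) * (T : ℝ) ^ α) := by
  have hα2 : (1:ℝ) ≤ 2 - α := by linarith
  have hα2' : (0:ℝ) < 2 - α := by linarith
  have hQ : 0 < C * (2/μ) ^ (1+α) := by positivity
  have ht₀R : (1:ℝ) ≤ (t₀:ℝ) := by exact_mod_cast ht₀
  -- per-step bound after multiplying by t(t+1)
  have termbd : ∀ t : ℕ, 1 ≤ t →
      (t:ℝ) * ((t:ℝ)+1) * (C * (2 / (((t:ℝ)+1)*μ)) ^ (1+α))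
        ≤ C * (2/μ)^(1+α) * (t:ℝ)^((1:ℝ)-α) := by
    intro t ht
    have ht0 : (1:ℝ) ≤ (t:ℝ) := by exact_mod_cast ht
    have htp : (0:ℝ) < (t:ℝ) := by linarith
    have ht1 : (0:ℝ) < (t:ℝ)+1 := by linarith
    have e1 : (2 / (((t:ℝ)+1)*μ)) ^ (1+α) = (2/μ)^(1+α) / ((t:ℝ)+1)^(1+α) := by
      rw [show (2:ℝ) / (((t:ℝ)+1)*μ) = (2/μ) / ((t:ℝ)+1) by
        rw [div_div, mul_comm], Real.div_rpow (by positivity) ht1.le]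
    rw [e1]
    have e2 : ((t:ℝ)+1)^((1:ℝ)+α) = ((t:ℝ)+1) * ((t:ℝ)+1)^α := by
      rw [Real.rpow_add ht1, Real.rpow_one]
    have e3 : (t:ℝ)^((1:ℝ)-α) = (t:ℝ) / (t:ℝ)^α := by
      rw [Real.rpow_sub htp, Real.rpow_one]
    have h4 : (t:ℝ)^α ≤ ((t:ℝ)+1)^α := Real.rpow_le_rpow htp.le (by linarith) hα.le
    have h5 : (0:ℝ) < (t:ℝ)^α := Real.rpow_pos_of_pos htp α
    have h6 : (t:ℝ) / ((t:ℝ)+1)^α ≤ (t:ℝ) / (t:ℝ)^α := by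
      gcongr
    calc (t:ℝ) * ((t:ℝ)+1) * (C * ((2/μ)^(1+α) / ((t:ℝ)+1)^(1+α)))
        = C * (2/μ)^(1+α) * ((t:ℝ) / ((t:ℝ)+1)^α) := by
          rw [e2]
          have hne : ((t:ℝ)+1)^α ≠ 0 := (Real.rpow_pos_of_pos ht1 α).ne'
          field_simp
      _ ≤ C * (2/μ)^(1+α) * ((t:ℝ) / (t:ℝ)^α) :=
          mul_le_mul_of_nonneg_left h6 hQ.le
      _ = C * (2/μ)^(1+α) * (t:ℝ)^((1:ℝ)-α) := by rw [e3]
  -- Bernoulli-type key inequality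
  have key : ∀ a : ℝ, 1 ≤ a →
      a^((2:ℝ)-α)/(2-α) + a^((1:ℝ)-α) ≤ (a+1)^((2:ℝ)-α)/(2-α) := by
    intro a ha
    have ha0 : (0:ℝ) < a := by linarith
    have hmain : a^((2:ℝ)-α) + (2-α)*a^((1:ℝ)-α) ≤ (a+1)^((2:ℝ)-α) := by
      have hs : (-1:ℝ) ≤ 1/a := by
        have : (0:ℝ) ≤ 1/a := by positivity
        linarith
      have h1 : 1 + (2-α)*(1/a) ≤ (1 + 1/a)^((2:ℝ)-α) :=
        one_add_mul_self_le_rpow_one_add hs hα2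
      have h2 : (a+1)^((2:ℝ)-α) = a^((2:ℝ)-α) * (1 + 1/a)^((2:ℝ)-α) := by
        rw [← Real.mul_rpow ha0.le (by positivity)]
        congr 1; field_simp
      have h3 : a^((2:ℝ)-α) * (1/a) = a^((1:ℝ)-α) := by
        rw [one_div, ← Real.rpow_neg_one a, ← Real.rpow_add ha0]
        congr 1
        ring
      have h4 := mul_le_mul_of_nonneg_left h1 (Real.rpow_nonneg ha0.le ((2:ℝ)-α))
      have h5 : a^((2:ℝ)-α) * (1 + (2-α)*(1/a)) = a^((2:ℝ)-α) + (2-α)*a^((1:ℝ)-α) := by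
        rw [← h3]; ring
      have h6 : a^((2:ℝ)-α) + (2-α)*a^((1:ℝ)-α)
          ≤ a^((2:ℝ)-α) * (1+1/a)^((2:ℝ)-α) := by rw [← h5]; exact h4
      rw [h2]; exact h6
    rw [div_add' _ _ _ hα2'.ne', div_le_div_iff_of_pos_right hα2']
    linarith
  -- one recursion step, multiplied out
  have step : ∀ t : ℕ, t₀ ≤ t →
      (t:ℝ)*((t:ℝ)+1)*B (t+1)
        ≤ ((t:ℝ)-1)*(t:ℝ)*B t + C*(2/μ)^(1+α)*(t:ℝ)^((1:ℝ)-α) := by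
    intro t ht
    have ht1 : (1:ℝ) ≤ (t:ℝ) := by exact_mod_cast le_trans ht₀ ht
    have hpos : (0:ℝ) ≤ (t:ℝ)*((t:ℝ)+1) := by positivity
    have h1 := mul_le_mul_of_nonneg_left (hrec t ht) hpos
    have h2 : (t:ℝ)*((t:ℝ)+1) * ((((t:ℝ)-1)/((t:ℝ)+1))*B t) = ((t:ℝ)-1)*(t:ℝ)*B t := by
      have hne : ((t:ℝ)+1) ≠ 0 := by linarith
      field_simp
    have h3 : (t:ℝ)*((t:ℝ)+1) * ((((t:ℝ)-1)/((t:ℝ)+1))*B t + C * (2 / (((t:ℝ)+1)*μ)) ^ (1+α))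
        = (t:ℝ)*((t:ℝ)+1) * ((((t:ℝ)-1)/((t:ℝ)+1))*B t)
          + (t:ℝ)*((t:ℝ)+1) * (C * (2 / (((t:ℝ)+1)*μ)) ^ (1+α)) := by ring
    rw [h3, h2] at h1
    linarith [termbd t (le_trans ht₀ ht)]
  -- main induction
  have main : ∀ T : ℕ, t₀ ≤ T →
      (T:ℝ)*((T:ℝ)+1)*B (T+1) ≤ (t₀:ℝ)*((t₀:ℝ)-1)*B t₀
        + C*(2/μ)^(1+α) * (((T:ℝ)+1)^((2:ℝ)-α)/(2-α)) := by
    intro T hT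
    induction T, hT using Nat.le_induction with
    | base =>
      have hs := step t₀ le_rfl
      have h4 : (t₀:ℝ)^((1:ℝ)-α) ≤ ((t₀:ℝ)+1)^((2:ℝ)-α)/(2-α) := by
        have e1 : (t₀:ℝ)^((1:ℝ)-α) ≤ ((t₀:ℝ)+1)^((1:ℝ)-α) :=
          Real.rpow_le_rpow (by linarith) (by linarith) (by linarith)
        have e2 : ((t₀:ℝ)+1)^((2:ℝ)-α) = ((t₀:ℝ)+1) * ((t₀:ℝ)+1)^((1:ℝ)-α) := by
          rw [show ((2:ℝ)-α) = 1 + (1-α) by ring, Real.rpow_add (by linarith),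
            Real.rpow_one]
        rw [e2, le_div_iff₀ hα2']
        have e3 : (0:ℝ) ≤ ((t₀:ℝ)+1)^((1:ℝ)-α) := Real.rpow_nonneg (by linarith) _
        have e4 := mul_le_mul_of_nonneg_left e1 hα2'.le
        have e5 := mul_le_mul_of_nonneg_right (show (2-α:ℝ) ≤ (t₀:ℝ)+1 by linarith) e3
        linarith
      have h5 := mul_le_mul_of_nonneg_left h4 hQ.le
      linarith [hs, h5]
    | succ n hn ih =>
      have hs := step (n+1) (le_trans hn (Nat.le_succ n))
      have hn1 : (1:ℝ) ≤ (n:ℝ) := by exact_mod_cast le_trans ht₀ hn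
      push_cast at hs ⊢
      have e1 : ((n:ℝ)+1-1)*((n:ℝ)+1) = (n:ℝ)*((n:ℝ)+1) := by ring
      rw [e1] at hs
      have key' := key ((n:ℝ)+1) (by linarith)
      have h7 := mul_le_mul_of_nonneg_left key' hQ.le
      rw [mul_add] at h7
      linarith [hs, ih, h7]
  -- conclude
  intro T hT
  have hm := main T hT
  have hT1 : (1:ℝ) ≤ (T:ℝ) := by exact_mod_cast le_trans ht₀ hT
  have hTt₀ : (t₀:ℝ) ≤ (T:ℝ) := by exact_mod_cast hT
  have hTp : (0:ℝ) < (T:ℝ) := by linarith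
  have hTpos : (0:ℝ) < (T:ℝ)*((T:ℝ)+1) := by positivity
  set A := (t₀:ℝ)*((t₀:ℝ)-1)*B t₀ with hA
  set Q := C*(2/μ)^(1+α) with hQdef
  set K := (1 + 1/(t₀:ℝ))^((1:ℝ)-α) with hK
  have hKpos : (0:ℝ) < K := Real.rpow_pos_of_pos (by positivity) _
  have hdiv : B (T+1) ≤ (A + Q*(((T:ℝ)+1)^((2:ℝ)-α)/(2-α))) / ((T:ℝ)*((T:ℝ)+1)) := by
    rw [le_div_iff₀ hTpos]
    linarith [hm]
  have hT2 : ((T:ℝ)+1)^((2:ℝ)-α) = ((T:ℝ)+1) * ((T:ℝ)+1)^((1:ℝ)-α) := by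
    rw [show ((2:ℝ)-α) = 1 + (1-α) by ring, Real.rpow_add (by linarith), Real.rpow_one]
  have hTT : (T:ℝ)^((1:ℝ)-α) * (T:ℝ)^α = (T:ℝ) := by
    rw [← Real.rpow_add hTp]
    norm_num
  have hstep1 : ((T:ℝ)+1) ≤ (1+1/(t₀:ℝ)) * (T:ℝ) := by
    have h1 : (1:ℝ) ≤ (T:ℝ)/(t₀:ℝ) := (one_le_div (by linarith)).mpr hTt₀
    have h2 : (T:ℝ)/(t₀:ℝ) = 1/(t₀:ℝ) * (T:ℝ) := by ring
    nlinarith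
  have hstep2 : ((T:ℝ)+1)^((1:ℝ)-α) ≤ K * (T:ℝ)^((1:ℝ)-α) := by
    rw [hK, ← Real.mul_rpow (by positivity) hTp.le]
    exact Real.rpow_le_rpow (by linarith) hstep1 (by linarith)
  have hvnn : (0:ℝ) ≤ (T:ℝ)^α := Real.rpow_nonneg hTp.le _
  have hcore : ((T:ℝ)+1)^((2:ℝ)-α) * (T:ℝ)^α ≤ K * ((T:ℝ)*((T:ℝ)+1)) := by
    rw [hT2]
    calc ((T:ℝ)+1) * ((T:ℝ)+1)^((1:ℝ)-α) * (T:ℝ)^α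
        ≤ ((T:ℝ)+1) * (K * (T:ℝ)^((1:ℝ)-α)) * (T:ℝ)^α := by
          have := mul_le_mul_of_nonneg_left hstep2 (show (0:ℝ) ≤ (T:ℝ)+1 by linarith)
          exact mul_le_mul_of_nonneg_right this hvnn
      _ = K * ((T:ℝ)^((1:ℝ)-α) * (T:ℝ)^α) * ((T:ℝ)+1) := by ring
      _ = K * ((T:ℝ)*((T:ℝ)+1)) := by rw [hTT]; ring
  have hfinal : Q*(((T:ℝ)+1)^((2:ℝ)-α)/(2-α)) / ((T:ℝ)*((T:ℝ)+1))
      ≤ K * C * (2/μ)^(1+α) / ((2-α)*(T:ℝ)^α) := by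
    rw [div_le_div_iff₀ hTpos (by positivity)]
    have e : Q*(((T:ℝ)+1)^((2:ℝ)-α)/(2-α)) * ((2-α)*(T:ℝ)^α)
        = Q * (((T:ℝ)+1)^((2:ℝ)-α) * (T:ℝ)^α) := by
      field_simp
    rw [e]
    calc Q * (((T:ℝ)+1)^((2:ℝ)-α) * (T:ℝ)^α)
        ≤ Q * (K * ((T:ℝ)*((T:ℝ)+1))) := mul_le_mul_of_nonneg_left hcore hQ.le
      _ = K * C * (2/μ)^(1+α) * ((T:ℝ)*((T:ℝ)+1)) := by rw [hQdef]; ring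
  calc B (T+1) ≤ (A + Q*(((T:ℝ)+1)^((2:ℝ)-α)/(2-α))) / ((T:ℝ)*((T:ℝ)+1)) := hdiv
    _ = A / ((T:ℝ)*((T:ℝ)+1))
        + Q*(((T:ℝ)+1)^((2:ℝ)-α)/(2-α)) / ((T:ℝ)*((T:ℝ)+1)) := add_div _ _ _
    _ ≤ A / ((T:ℝ)*((T:ℝ)+1)) + K * C * (2/μ)^(1+α) / ((2-α)*(T:ℝ)^α) := by
        linarith [hfinal]
end
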